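/- Let U ⊆ ℂ be open and g : U → ℂ holomorphic. Define Y : U → ℝ³ ≅ ℂ × ℝ by Y = ( 2g/(1+|g|²), (1−|g|²)/(1+|g|²) ), i.e. the composition of g with the inverse stereographic projection from the south pole. Then |Y| = 1 on U and the Euclidean inner products of the partial derivatives of Y satisfy ⟨Y_{,i}, Y_{,j}⟩ = (4|g'|²/(1+|g|²)²) δ_{ij} for 1 ≤ i,j ≤ 2, where subscripts ,1 and ,2 denote partial differentiation in u and v with z = u + iv. -/

import Mathlib

open Complex

noncomputable section

/-- Euclidean inner product on ℂ ≅ ℝ²: ⟨w₁,w₂⟩ = Re(w̄₁ w₂). -/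
def inn (w₁ w₂ : ℂ) : ℝ := ((starRingEnd ℂ) w₁ * w₂).re

/-- Partial derivative in u (z = u + iv). -/
def pd1 (f : ℂ → ℝ) (z : ℂ) : ℝ := fderiv ℝ f z 1
/-- Partial derivative in v (z = u + iv). -/
def pd2 (f : ℂ → ℝ) (z : ℂ) : ℝ := fderiv ℝ f z Complex.I
/-- Euclidean Laplacian Δf = f_{,11} + f_{,22}. -/
def lap (f : ℂ → ℝ) (z : ℂ) : ℝ := pd1 (pd1 f) z + pd2 (pd2 f) z

/-- Partial derivative in u of an ℝ³ ≅ ℂ × ℝ valued map. -/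
def pdv1 (f : ℂ → ℂ × ℝ) (z : ℂ) : ℂ × ℝ := fderiv ℝ f z 1
/-- Partial derivative in v of an ℝ³ ≅ ℂ × ℝ valued map. -/
def pdv2 (f : ℂ → ℂ × ℝ) (z : ℂ) : ℂ × ℝ := fderiv ℝ f z Complex.I
/-- Euclidean inner product on ℝ³ ≅ ℂ × ℝ. -/
def inn3 (p q : ℂ × ℝ) : ℝ := inn p.1 q.1 + p.2 * q.2

theorem inn_div_div (p q : ℂ) (t : ℝ) :
    inn (p / (t : ℂ)) (q / (t : ℂ)) = inn p q / t ^ 2 := by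
  rw [inn, inn, map_div₀, Complex.conj_ofReal, div_mul_div_comm, ← Complex.ofReal_mul,
    Complex.div_ofReal_re, pow_two]

set_option maxHeartbeats 2000000 in
/-- Y = π₋⁻¹ ∘ g satisfies |Y| = 1 and
⟨Y_{,i},Y_{,j}⟩ = (4|g'|²/(1+|g|²)²) δ_{ij} for 1 ≤ i,j ≤ 2. -/
theorem stmt_5 (U : Set ℂ) (hU : IsOpen U)
    (g g' : ℂ → ℂ) (hg : ∀ z ∈ U, HasDerivAt g (g' z) z) :
    let Y : ℂ → ℂ × ℝ := fun w =>
      (2 * g w / ((1 + ‖g w‖ ^ 2 : ℝ) : ℂ),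
        (1 - ‖g w‖ ^ 2) / (1 + ‖g w‖ ^ 2))
    ∀ z ∈ U,
      Real.sqrt (inn3 (Y z) (Y z)) = 1 ∧
      inn3 (pdv1 Y z) (pdv1 Y z)
          = 4 * ‖g' z‖ ^ 2 / (1 + ‖g z‖ ^ 2) ^ 2 ∧
      inn3 (pdv2 Y z) (pdv2 Y z)
          = 4 * ‖g' z‖ ^ 2 / (1 + ‖g z‖ ^ 2) ^ 2 ∧
      inn3 (pdv1 Y z) (pdv2 Y z) = 0 := by
  intro Y z hz
  have hgR := ((hg z hz).hasFDerivAt).restrictScalars ℝ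
  have hq := Complex.reCLM.hasFDerivAt.comp z (hgR.mul hgR.star)
  have habs : (⇑Complex.reCLM ∘ (g * fun x => star (g x))) = fun w => ‖g w‖ ^ 2 := by
    funext w
    simp only [Function.comp_apply, Pi.mul_apply, Complex.reCLM_apply, ← Complex.sq_norm]
    rw [show (star (g w)) = (starRingEnd ℂ) (g w) from rfl, Complex.mul_conj]
    simp [Complex.sq_norm]
  rw [habs] at hq
  have hs : (0:ℝ) < 1 + ‖g z‖ ^ 2 := by positivity
  have h1 := hq.const_add (1:ℝ)
  have hdenC := Complex.ofRealCLM.hasFDerivAt.comp z h1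
  have hinvC := ((hasFDerivAt_inv (x := ((1 + ‖g z‖ ^ 2 : ℝ) : ℂ))
      (by exact_mod_cast hs.ne')).restrictScalars ℝ).comp z hdenC
  have hnum := hgR.const_mul (2:ℂ)
  have hY1 := hnum.mul hinvC
  have hinvR := ((hasFDerivAt_inv (x := (1 + ‖g z‖ ^ 2 : ℝ))
      hs.ne').restrictScalars ℝ).comp z h1
  have hY2 := (hq.const_sub (1:ℝ)).mul hinvR
  have hY : HasFDerivAt (fun x => ((2 * g x *
        (((fun y : ℂ => y⁻¹) ∘ ⇑ofRealCLM ∘ fun x => 1 + ‖g x‖ ^ 2) x)),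
      ((1 - ‖g x‖ ^ 2) * (((fun y : ℝ => y⁻¹) ∘ fun x => 1 + ‖g x‖ ^ 2) x)))) _ z :=
    HasFDerivAt.prodMk hY1 hY2
  have hYeq : (fun x => ((2 * g x *
        (((fun y : ℂ => y⁻¹) ∘ ⇑ofRealCLM ∘ fun x => 1 + ‖g x‖ ^ 2) x)),
      ((1 - ‖g x‖ ^ 2) * (((fun y : ℝ => y⁻¹) ∘ fun x => 1 + ‖g x‖ ^ 2) x))))
      = fun w => ((2 * g w / ((1 + ‖g w‖ ^ 2 : ℝ) : ℂ)),
        ((1 - ‖g w‖ ^ 2) / (1 + ‖g w‖ ^ 2))) := by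
    funext w; simp [div_eq_mul_inv]
  rw [hYeq] at hY
  have hfd := hY.fderiv
  set s : ℝ := 1 + ‖g z‖ ^ 2 with hsd
  set r : ℝ := (g z).re * (g' z).re + (g z).im * (g' z).im with hrd
  set m : ℝ := (g z).re * (g' z).im - (g z).im * (g' z).re with hmd
  clear_value s r m
  have hsne : s ≠ 0 := hs.ne'
  have hne : (1 + ((g z).re * (g z).re + (g z).im * (g z).im)) ≠ 0 := by
    nlinarith [mul_self_nonneg (g z).re, mul_self_nonneg (g z).im]
  have hne2 : (1 + ((g z).re ^ 2 + (g z).im ^ 2)) ≠ 0 := by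
    nlinarith [sq_nonneg (g z).re, sq_nonneg (g z).im]
  have hs2 : (g z).re * (g z).re + (g z).im * (g z).im = s - 1 := by
    rw [hsd, Complex.sq_norm, Complex.normSq_apply]; ring
  have hsx : s = 1 + ((g z).re ^ 2 + (g z).im ^ 2) := by
    rw [hsd, Complex.sq_norm, Complex.normSq_apply]; ring
  have P1 : pdv1 Y z = ((2 * g' z * (s : ℂ) - 4 * (r : ℂ) * g z) / ((s ^ 2 : ℝ) : ℂ),
      -4 * r / s ^ 2) := by
    simp only [pdv1, Y]
    rw [hfd]
    simp [smul_smul, ← Complex.ofReal_pow, ← Complex.ofReal_one, ← Complex.ofReal_add,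
      Complex.ofReal_re, Complex.ofReal_im, Complex.normSq_ofReal, Complex.sq_norm,
      Complex.normSq_apply, Complex.ext_iff]
    rw [hrd, hsx]
    refine ⟨⟨by field_simp [hne, hne2]; ring, by field_simp [hne, hne2]; ring⟩, by field_simp [hne, hne2]; ring⟩
  have P2 : pdv2 Y z = ((2 * Complex.I * g' z * (s : ℂ) + 4 * (m : ℂ) * g z) / ((s ^ 2 : ℝ) : ℂ),
      4 * m / s ^ 2) := by
    simp only [pdv2, Y]
    rw [hfd]
    simp [smul_smul, ← Complex.ofReal_pow, ← Complex.ofReal_one, ← Complex.ofReal_add,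
      Complex.ofReal_re, Complex.ofReal_im, Complex.normSq_ofReal, Complex.sq_norm,
      Complex.normSq_apply, Complex.ext_iff]
    rw [hmd, hsx]
    refine ⟨⟨by field_simp [hne, hne2]; ring, by field_simp [hne, hne2]; ring⟩, by field_simp [hne, hne2]; ring⟩
  refine ⟨?_, ?_, ?_, ?_⟩
  · have h1' : inn3 (Y z) (Y z) = 1 := by
      simp only [Y, inn3, inn, map_div₀, Complex.conj_ofReal, div_mul_div_comm,
        ← Complex.normSq_eq_conj_mul_self]
      simp only [Complex.div_re, Complex.normSq_ofReal, Complex.sq_norm, Complex.normSq_apply,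
        Complex.ofReal_re, Complex.ofReal_im, Complex.mul_re, Complex.mul_im,
        Complex.re_ofNat, Complex.im_ofNat]
      field_simp
      ring
    rw [h1', Real.sqrt_one]
  · rw [P1]
    simp only [inn3, inn_div_div]
    have hA : inn (2 * g' z * (s : ℂ) - 4 * (r : ℂ) * g z) (2 * g' z * (s : ℂ) - 4 * (r : ℂ) * g z)
        = (2 * (g' z).re * s - 4 * r * (g z).re) ^ 2 + (2 * (g' z).im * s - 4 * r * (g z).im) ^ 2 := by
      simp [inn, Complex.mul_re, Complex.mul_im, Complex.sub_re, Complex.sub_im,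
        Complex.conj_re, Complex.conj_im, Complex.ofReal_re, Complex.ofReal_im]
      ring
    rw [hA, Complex.sq_norm, Complex.normSq_apply, hrd, hsx]
    field_simp
    ring
  · rw [P2]
    simp only [inn3, inn_div_div]
    have hB : inn (2 * Complex.I * g' z * (s : ℂ) + 4 * (m : ℂ) * g z)
        (2 * Complex.I * g' z * (s : ℂ) + 4 * (m : ℂ) * g z)
        = (-2 * (g' z).im * s + 4 * m * (g z).re) ^ 2 + (2 * (g' z).re * s + 4 * m * (g z).im) ^ 2 := by
      simp [inn, Complex.mul_re, Complex.mul_im, Complex.add_re, Complex.add_im,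
        Complex.conj_re, Complex.conj_im, Complex.ofReal_re, Complex.ofReal_im,
        Complex.I_re, Complex.I_im]
      ring
    rw [hB, Complex.sq_norm, Complex.normSq_apply, hmd, hsx]
    field_simp
    ring
  · rw [P1, P2]
    simp only [inn3, inn_div_div]
    have hC : inn (2 * g' z * (s : ℂ) - 4 * (r : ℂ) * g z)
        (2 * Complex.I * g' z * (s : ℂ) + 4 * (m : ℂ) * g z)
        = (2 * (g' z).re * s - 4 * r * (g z).re) * (-2 * (g' z).im * s + 4 * m * (g z).re)
          + (2 * (g' z).im * s - 4 * r * (g z).im) * (2 * (g' z).re * s + 4 * m * (g z).im) := by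
      simp [inn, Complex.mul_re, Complex.mul_im, Complex.add_re, Complex.add_im,
        Complex.sub_re, Complex.sub_im, Complex.conj_re, Complex.conj_im,
        Complex.ofReal_re, Complex.ofReal_im, Complex.I_re, Complex.I_im]
      ring
    rw [hC, hrd, hmd, hsx]
    field_simp
    ring
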